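/- Let Φ ∈ ℝⁿˣʳ with ΦᵀΦ = I_r, B_r ∈ ℝʳˣᵐ, Q ∈ ℝⁿˣⁿ symmetric, c ∈ ℝᵈ, and let h: ℝⁿ → ℝᵈ be continuously differentiable with Jacobian J_h(x) ∈ ℝᵈˣⁿ Lipschitz continuous with constant C_Lip[J_h]; set ∇H(x) := Qx + J_h(x)ᵀc and assume ∇H is Lipschitz with constant C_Lip[∇H]. Let ℙ := Ψ(PᵀΨ)⁻¹Pᵀ with Ψ ∈ ℝᵈˣᵐ⁰ having orthonormal columns and P a selection matrix with PᵀΨ invertible. For x ∈ ℝⁿ, x_r ∈ ℝʳ, y ∈ ℝᵐ, and Q_r := ΦᵀQΦ, define y_r := B_rᵀ(Q_r x_r + Φᵀ J_h(Φ x_r)ᵀ ℙᵀ c), φ := y − B_rᵀΦᵀ∇H(x), ρ := x − ΦΦᵀx, ξ := (I − ℙ)J_h(ΦΦᵀx)Φ, θ := ΦΦᵀx − Φx_r, C₄ := ‖B_rᵀΦᵀ‖·C_Lip[∇H], C₅ := ‖B_r‖·‖c‖, and C₆ := ‖B_rᵀΦᵀ‖·(‖Q‖ + C_Lip[J_h]·‖(PᵀΨ)⁻¹‖·‖c‖).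 Then ‖y − y_r‖ ≤ ‖φ‖ + C₄‖ρ‖ + C₅‖ξ‖ + C₆‖θ‖. -/

import Mathlib

open Matrix MeasureTheory RealInnerProductSpace

noncomputable section

/-- Euclidean space `ℝⁿ`. -/
abbrev Evec (n : ℕ) := EuclideanSpace ℝ (Fin n)

/-- Matrix-vector product on Euclidean spaces. -/
def mv {a b : ℕ} (M : Matrix (Fin a) (Fin b) ℝ) (v : Evec b) : Evec a := WithLp.toLp 2 (M.mulVec v)

/-- Spectral (operator) norm of a real matrix, viewed as a linear map between
Euclidean spaces. -/
def spec {a b : ℕ} (M : Matrix (Fin a) (Fin b) ℝ) : ℝ :=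
  ‖LinearMap.toContinuousLinearMap (Matrix.toEuclideanLin M)‖

section Helpers

open scoped Matrix.Norms.L2Operator

lemma spec_eq_l2norm {a b : ℕ} (M : Matrix (Fin a) (Fin b) ℝ) : spec M = ‖M‖ := rfl

lemma spec_nonneg {a b : ℕ} (M : Matrix (Fin a) (Fin b) ℝ) : 0 ≤ spec M :=
  norm_nonneg _

lemma norm_mv_le {a b : ℕ} (M : Matrix (Fin a) (Fin b) ℝ) (v : Evec b) :
    ‖mv M v‖ ≤ spec M * ‖v‖ :=
  (LinearMap.toContinuousLinearMap (Matrix.toEuclideanLin M)).le_opNorm v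

lemma spec_mul_le {a b c : ℕ} (A : Matrix (Fin a) (Fin b) ℝ) (B : Matrix (Fin b) (Fin c) ℝ) :
    spec (A * B) ≤ spec A * spec B := by
  simpa only [spec_eq_l2norm] using Matrix.l2_opNorm_mul A B

lemma spec_transpose {a b : ℕ} (A : Matrix (Fin a) (Fin b) ℝ) : spec Aᵀ = spec A := by
  have := Matrix.l2_opNorm_conjTranspose A
  rw [Matrix.conjTranspose_eq_transpose_of_trivial] at this
  simpa only [spec_eq_l2norm] using this

lemma spec_one_le {k : ℕ} : spec (1 : Matrix (Fin k) (Fin k) ℝ) ≤ 1 := by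
  apply ContinuousLinearMap.opNorm_le_bound _ zero_le_one
  intro v
  rw [one_mul]
  have hv : (LinearMap.toContinuousLinearMap
      (Matrix.toEuclideanLin (1 : Matrix (Fin k) (Fin k) ℝ))) v = v := by
    show (mv 1 v) = v
    ext i
    simp [mv, Matrix.one_mulVec]
  rw [hv]

lemma spec_orth_le_one {a b : ℕ} (M : Matrix (Fin a) (Fin b) ℝ) (hM : Mᵀ * M = 1) :
    spec M ≤ 1 := by
  have h1 := Matrix.l2_opNorm_conjTranspose_mul_self M
  rw [Matrix.conjTranspose_eq_transpose_of_trivial, hM] at h1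
  have h2 : spec M * spec M ≤ 1 := by
    rw [spec_eq_l2norm, ← h1]
    exact spec_one_le
  nlinarith [spec_nonneg M]

end Helpers

lemma mv_mul {a b c : ℕ} (A : Matrix (Fin a) (Fin b) ℝ) (B : Matrix (Fin b) (Fin c) ℝ)
    (v : Evec c) : mv (A * B) v = mv A (mv B v) := by
  simp [mv, Matrix.mulVec_mulVec]

lemma mv_add {a b : ℕ} (A : Matrix (Fin a) (Fin b) ℝ) (u v : Evec b) :
    mv A (u + v) = mv A u + mv A v := by
  ext i
  simp [mv, Matrix.mulVec, dotProduct, mul_add, Finset.sum_add_distrib]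

lemma mv_sub {a b : ℕ} (A : Matrix (Fin a) (Fin b) ℝ) (u v : Evec b) :
    mv A (u - v) = mv A u - mv A v := by
  ext i
  simp [mv, Matrix.mulVec, dotProduct, mul_sub, Finset.sum_sub_distrib]

lemma mv_matadd {a b : ℕ} (A B : Matrix (Fin a) (Fin b) ℝ) (v : Evec b) :
    mv (A + B) v = mv A v + mv B v := by
  ext i
  simp [mv, Matrix.mulVec, dotProduct, Matrix.add_apply, add_mul,
    Finset.sum_add_distrib]

lemma mv_matsub {a b : ℕ} (A B : Matrix (Fin a) (Fin b) ℝ) (v : Evec b) :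
    mv (A - B) v = mv A v - mv B v := by
  ext i
  simp [mv, Matrix.mulVec, dotProduct, Matrix.sub_apply, sub_mul,
    Finset.sum_sub_distrib]

/-- A selection matrix has orthonormal columns. -/
lemma selection_orth {d m0 : ℕ} (P : Matrix (Fin d) (Fin m0) ℝ)
    (hP : ∃ ℘ : Fin m0 → Fin d, Function.Injective ℘ ∧
      ∀ i j, P i j = if i = ℘ j then 1 else 0) : Pᵀ * P = 1 := by
  obtain ⟨℘, hinj, hPe⟩ := hP
  ext j k
  simp only [Matrix.mul_apply, Matrix.transpose_apply, hPe, Matrix.one_apply]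
  rw [Finset.sum_congr rfl (fun i _ => by
    rw [ite_mul, one_mul, zero_mul] : ∀ i ∈ Finset.univ,
      (if i = ℘ j then (1:ℝ) else 0) * (if i = ℘ k then 1 else 0)
        = if i = ℘ j then (if i = ℘ k then (1:ℝ) else 0) else 0)]
  rw [Finset.sum_ite_eq' Finset.univ (℘ j)
    (fun i => if i = ℘ k then (1:ℝ) else 0)]
  simp [hinj.eq_iff, eq_comm]

/-- Pointwise splitting of the pH-OpInf-DEIM output error:
with `y_r = B_rᵀ(Q_r x_r + Φᵀ J_h(Φ x_r)ᵀ ℙᵀ c)`, `φ = y − B_rᵀΦᵀ∇H(x)`,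
`ρ = x − ΦΦᵀx`, `ξ = (I − ℙ)J_h(ΦΦᵀx)Φ` and `θ = ΦΦᵀx − Φx_r`,
`‖y − y_r‖ ≤ ‖φ‖ + C₄‖ρ‖ + C₅‖ξ‖ + C₆‖θ‖`. -/
theorem pointwise_output_error_split_deim {n r d m m0 : ℕ}
    (Φ : Matrix (Fin n) (Fin r) ℝ) (hΦ : Φᵀ * Φ = 1)
    (Br : Matrix (Fin r) (Fin m) ℝ)
    (Q : Matrix (Fin n) (Fin n) ℝ) (hQ : Qᵀ = Q) (c : Evec d)
    (h : Evec n → Evec d) (Jh : Evec n → Matrix (Fin d) (Fin n) ℝ)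
    (hJac : ∀ p, HasFDerivAt h
      (LinearMap.toContinuousLinearMap (Matrix.toEuclideanLin (Jh p))) p)
    (CLipJ : ℝ) (hLipJ : ∀ a b : Evec n, spec (Jh a - Jh b) ≤ CLipJ * ‖a - b‖)
    (gH : Evec n → Evec n) (hgH : ∀ p, gH p = mv Q p + mv (Jh p)ᵀ c)
    (CLipH : ℝ) (hLipH : ∀ a b : Evec n, ‖gH a - gH b‖ ≤ CLipH * ‖a - b‖)
    (Ψ P : Matrix (Fin d) (Fin m0) ℝ)
    (hΨ : Ψᵀ * Ψ = 1)
    (hP : ∃ ℘ : Fin m0 → Fin d, Function.Injective ℘ ∧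
      ∀ i j, P i j = if i = ℘ j then 1 else 0)
    (hPΨ : IsUnit (Pᵀ * Ψ))
    (Pbb : Matrix (Fin d) (Fin d) ℝ) (hPbb : Pbb = Ψ * (Pᵀ * Ψ)⁻¹ * Pᵀ)
    (Qr : Matrix (Fin r) (Fin r) ℝ) (hQrdef : Qr = Φᵀ * Q * Φ)
    (x : Evec n) (xr : Evec r) (y : Evec m)
    (yr : Evec m)
    (hyr : yr = mv Brᵀ (mv Qr xr + mv Φᵀ (mv (Jh (mv Φ xr))ᵀ (mv Pbbᵀ c))))
    (φv : Evec m) (hφv : φv = y - mv Brᵀ (mv Φᵀ (gH x)))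
    (ρv : Evec n) (hρv : ρv = x - mv Φ (mv Φᵀ x))
    (ξM : Matrix (Fin d) (Fin r) ℝ) (hξM : ξM = (1 - Pbb) * Jh (mv Φ (mv Φᵀ x)) * Φ)
    (θv : Evec n) (hθv : θv = mv Φ (mv Φᵀ x) - mv Φ xr)
    (C₄ C₅ C₆ : ℝ)
    (hC₄ : C₄ = spec (Brᵀ * Φᵀ) * CLipH)
    (hC₅ : C₅ = spec Br * ‖c‖)
    (hC₆ : C₆ = spec (Brᵀ * Φᵀ) * (spec Q + CLipJ * spec ((Pᵀ * Ψ)⁻¹) * ‖c‖)) :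
    ‖y - yr‖ ≤ ‖φv‖ + C₄ * ‖ρv‖ + C₅ * spec ξM + C₆ * ‖θv‖ := by
  classical
  set L : Matrix (Fin m) (Fin n) ℝ := Brᵀ * Φᵀ with hL
  set xh : Evec n := mv Φ (mv Φᵀ x) with hxh
  set xt : Evec n := mv Φ xr with hxt
  -- rewrite yr
  have hyr' : yr = mv L (mv Q xt + mv (Jh xt)ᵀ (mv Pbbᵀ c)) := by
    rw [hyr, hQrdef, Matrix.mul_assoc, mv_mul, mv_mul, ← mv_add, ← mv_mul]
  have hφ' : φv = y - mv L (gH x) := by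
    rw [hφv, ← mv_mul]
  -- DEIM split of the nonlinear term
  have hJ : mv (Jh xh)ᵀ c - mv (Jh xt)ᵀ (mv Pbbᵀ c)
      = mv (((1 - Pbb) * Jh xh)ᵀ) c + mv ((Pbb * (Jh xh - Jh xt))ᵀ) c := by
    rw [← mv_mul, ← Matrix.transpose_mul, ← mv_matsub, ← mv_matadd,
      ← Matrix.transpose_sub, ← Matrix.transpose_add]
    congr 2
    rw [Matrix.sub_mul, Matrix.one_mul, Matrix.mul_sub]
    abel
  -- the ξ-term
  have hξterm : mv L (mv (((1 - Pbb) * Jh xh)ᵀ) c) = mv Brᵀ (mv ξMᵀ c) := by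
    have e : (mv Φᵀ (mv (((1 - Pbb) * Jh xh)ᵀ) c) : Evec r) = mv ξMᵀ c := by
      rw [hξM, Matrix.transpose_mul ((1 - Pbb) * Jh xh) Φ, ← mv_mul]
    rw [hL, mv_mul, e]
  -- key algebraic identity
  have key : y - yr = φv + (mv L (gH x - gH xh) + (mv L (mv Q θv)
      + (mv Brᵀ (mv ξMᵀ c) + mv L (mv ((Pbb * (Jh xh - Jh xt))ᵀ) c)))) := by
    rw [hφ', hyr', ← hξterm, ← mv_add, ← mv_add, ← mv_add]
    have inner : (gH x - gH xh) + (mv Q θv + (mv (((1 - Pbb) * Jh xh)ᵀ) c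
        + mv ((Pbb * (Jh xh - Jh xt))ᵀ) c))
        = gH x - (mv Q xt + mv (Jh xt)ᵀ (mv Pbbᵀ c)) := by
      rw [← hJ, hgH xh, hθv, mv_sub]
      abel
    rw [inner, mv_sub]
    abel
  -- basic norm facts
  have hρ : x - xh = ρv := by rw [hρv]
  have hθ : xh - xt = θv := by rw [hθv]
  have hLnn := spec_nonneg L
  have hcnn : (0:ℝ) ≤ ‖c‖ := norm_nonneg c
  have hθnn : (0:ℝ) ≤ ‖θv‖ := norm_nonneg θv
  have hInvnn := spec_nonneg ((Pᵀ * Ψ)⁻¹)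
  -- term 1
  have T1 : ‖mv L (gH x - gH xh)‖ ≤ C₄ * ‖ρv‖ := by
    calc ‖mv L (gH x - gH xh)‖ ≤ spec L * ‖gH x - gH xh‖ := norm_mv_le _ _
      _ ≤ spec L * (CLipH * ‖x - xh‖) := by
          apply mul_le_mul_of_nonneg_left (hLipH x xh) hLnn
      _ = C₄ * ‖ρv‖ := by rw [hρ, hC₄, hL]; ring
  -- term 2
  have T2 : ‖mv L (mv Q θv)‖ ≤ spec L * spec Q * ‖θv‖ := by
    calc ‖mv L (mv Q θv)‖ ≤ spec L * ‖mv Q θv‖ := norm_mv_le _ _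
      _ ≤ spec L * (spec Q * ‖θv‖) :=
          mul_le_mul_of_nonneg_left (norm_mv_le _ _) hLnn
      _ = spec L * spec Q * ‖θv‖ := by ring
  -- term 3
  have T3 : ‖mv Brᵀ (mv ξMᵀ c)‖ ≤ C₅ * spec ξM := by
    calc ‖mv Brᵀ (mv ξMᵀ c)‖ ≤ spec Brᵀ * ‖mv ξMᵀ c‖ := norm_mv_le _ _
      _ ≤ spec Brᵀ * (spec ξMᵀ * ‖c‖) :=
          mul_le_mul_of_nonneg_left (norm_mv_le _ _) (spec_nonneg _)
      _ = C₅ * spec ξM := by rw [spec_transpose, spec_transpose, hC₅]; ring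
  -- term 4
  have hPorth : Pᵀ * P = 1 := selection_orth P hP
  have hΨle : spec Ψ ≤ 1 := spec_orth_le_one Ψ hΨ
  have hPle : spec Pᵀ ≤ 1 := by rw [spec_transpose]; exact spec_orth_le_one P hPorth
  have hPbble : spec Pbb ≤ spec ((Pᵀ * Ψ)⁻¹) := by
    calc spec Pbb ≤ spec (Ψ * (Pᵀ * Ψ)⁻¹) * spec Pᵀ := by
          rw [hPbb]; exact spec_mul_le _ _
      _ ≤ spec (Ψ * (Pᵀ * Ψ)⁻¹) * 1 :=
          mul_le_mul_of_nonneg_left hPle (spec_nonneg _)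
      _ = spec (Ψ * (Pᵀ * Ψ)⁻¹) := mul_one _
      _ ≤ spec Ψ * spec ((Pᵀ * Ψ)⁻¹) := spec_mul_le _ _
      _ ≤ 1 * spec ((Pᵀ * Ψ)⁻¹) := mul_le_mul_of_nonneg_right hΨle hInvnn
      _ = spec ((Pᵀ * Ψ)⁻¹) := one_mul _
  have hΔJ : spec (Jh xh - Jh xt) ≤ CLipJ * ‖θv‖ := by
    have := hLipJ xh xt
    rwa [hθ] at this
  have hΔJnn := spec_nonneg (Jh xh - Jh xt)
  have T4 : ‖mv L (mv ((Pbb * (Jh xh - Jh xt))ᵀ) c)‖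
      ≤ spec L * (spec ((Pᵀ * Ψ)⁻¹) * (CLipJ * ‖θv‖)) * ‖c‖ := by
    have h1 : spec ((Pbb * (Jh xh - Jh xt))ᵀ) ≤ spec ((Pᵀ * Ψ)⁻¹) * (CLipJ * ‖θv‖) := by
      rw [spec_transpose]
      calc spec (Pbb * (Jh xh - Jh xt)) ≤ spec Pbb * spec (Jh xh - Jh xt) := spec_mul_le _ _
        _ ≤ spec ((Pᵀ * Ψ)⁻¹) * (CLipJ * ‖θv‖) :=
            mul_le_mul hPbble hΔJ hΔJnn hInvnn
    calc ‖mv L (mv ((Pbb * (Jh xh - Jh xt))ᵀ) c)‖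
        ≤ spec L * ‖mv ((Pbb * (Jh xh - Jh xt))ᵀ) c‖ := norm_mv_le _ _
      _ ≤ spec L * (spec ((Pbb * (Jh xh - Jh xt))ᵀ) * ‖c‖) :=
          mul_le_mul_of_nonneg_left
            (norm_mv_le _ _) hLnn
      _ ≤ spec L * (spec ((Pᵀ * Ψ)⁻¹) * (CLipJ * ‖θv‖) * ‖c‖) := by
          apply mul_le_mul_of_nonneg_left _ hLnn
          exact mul_le_mul_of_nonneg_right h1 hcnn
      _ = spec L * (spec ((Pᵀ * Ψ)⁻¹) * (CLipJ * ‖θv‖)) * ‖c‖ := by ring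
  -- combine
  have T24 : ‖mv L (mv Q θv)‖ + ‖mv L (mv ((Pbb * (Jh xh - Jh xt))ᵀ) c)‖ ≤ C₆ * ‖θv‖ := by
    have : spec L * spec Q * ‖θv‖
        + spec L * (spec ((Pᵀ * Ψ)⁻¹) * (CLipJ * ‖θv‖)) * ‖c‖ = C₆ * ‖θv‖ := by
      rw [hC₆, hL]; ring
    linarith [T2, T4]
  calc ‖y - yr‖ = ‖φv + (mv L (gH x - gH xh) + (mv L (mv Q θv)
        + (mv Brᵀ (mv ξMᵀ c) + mv L (mv ((Pbb * (Jh xh - Jh xt))ᵀ) c))))‖ := by rw [key]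
    _ ≤ ‖φv‖ + (‖mv L (gH x - gH xh)‖ + (‖mv L (mv Q θv)‖
        + (‖mv Brᵀ (mv ξMᵀ c)‖ + ‖mv L (mv ((Pbb * (Jh xh - Jh xt))ᵀ) c)‖))) := by
        refine (norm_add_le _ _).trans ?_
        gcongr
        refine (norm_add_le _ _).trans ?_
        gcongr
        refine (norm_add_le _ _).trans ?_
        gcongr
        exact norm_add_le _ _
    _ ≤ ‖φv‖ + C₄ * ‖ρv‖ + C₅ * spec ξM + C₆ * ‖θv‖ := by linarith [T1, T3, T24]
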